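/- Let n ≥ 2, k ≥ 1, m ≥ 0, and let S_1, …, S_n ⊆ S be action sets. Let (x_i^ng)_{i=1}^n be a nominal greedy profile, let z_1, …, z_{n−1} with z_i ⊆ S_i and |z_i| ≤ m, and let x_1^ag, …, x_n^ag be any sets with x_i^ag ⊆ S_i ∪ z_1 ∪ … ∪ z_{i−1} and |x_i^ag| ≤ k. Writing Z̃ := (z_1 ∪ … ∪ z_{n−1}) ∩ (x_1^ag ∪ … ∪ x_n^ag) and x^ng := x_1^ng ∪ … ∪ x_n^ng, it holds that f(x_1^ag ∪ … ∪ x_n^ag) ≤ 2·f(x^ng) + Δ(Z̃ | x^ng). -/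

import Mathlib

open Finset

variable {α : Type*}

/-- `f` is monotone on finsets. -/
def IsMonotoneFn (f : Finset α → ℝ) : Prop := ∀ A B : Finset α, A ⊆ B → f A ≤ f B

/-- `f` is submodular. -/
def IsSubmodularFn [DecidableEq α] (f : Finset α → ℝ) : Prop :=
  ∀ A B : Finset α, A ⊆ B → ∀ s ∉ B, f (insert s A) - f A ≥ f (insert s B) - f B

/-- Marginal contribution Δ(A|B) = f(A ∪ B) − f(B). -/
def marg [DecidableEq α] (f : Finset α → ℝ) (A B : Finset α) : ℝ := f (A ∪ B) - f B

/-- Δ^l(A|B): best marginal of a subset of `A` of size at most `l`. -/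
noncomputable def margSup [DecidableEq α] (f : Finset α → ℝ) (l : ℕ) (A B : Finset α) : ℝ :=
  (A.powerset.filter (fun C => C.card ≤ l)).sup' ⟨∅, by simp⟩ (fun C => marg f C B)

/-- Union of the first `i` sets: x_0 ∪ ⋯ ∪ x_{i-1}. -/
def pref [DecidableEq α] (x : ℕ → Finset α) (i : ℕ) : Finset α := (Finset.range i).biUnion x

/-- A nominal greedy profile. -/
def NomGreedy [DecidableEq α] (f : Finset α → ℝ) (Ss : ℕ → Finset α) (k n : ℕ)
    (x : ℕ → Finset α) : Prop :=
  ∀ i < n, x i ⊆ Ss i ∧ (x i).card ≤ k ∧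
    ∀ c : Finset α, c ⊆ Ss i → c.card ≤ k → f (c ∪ pref x i) ≤ f (x i ∪ pref x i)

/-- An augmented greedy profile. -/
def AugGreedy [DecidableEq α] (f : Finset α → ℝ) (Ss : ℕ → Finset α) (k m n : ℕ)
    (x z : ℕ → Finset α) : Prop :=
  ∀ i < n,
    (x i ⊆ Ss i ∪ pref z i ∧ (x i).card ≤ k ∧
      ∀ c : Finset α, c ⊆ Ss i ∪ pref z i → c.card ≤ k →
        f (c ∪ pref x i) ≤ f (x i ∪ pref x i)) ∧
    ∃ zk zr : Finset α,
      z i = zk ∪ zr ∧ zk ⊆ Ss i ∧ zk.card ≤ min k m ∧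
      (∀ w : Finset α, w ⊆ Ss i → w.card ≤ min k m →
        marg f w (pref x (i + 1)) ≤ marg f zk (pref x (i + 1))) ∧
      zr ⊆ Ss i ∧ zr.card ≤ m - k

/-- The optimal value OPT(f, (S_i), k) over feasible profiles with n agents. -/
noncomputable def OPTval [DecidableEq α] [Fintype α] (f : Finset α → ℝ) (Ss : ℕ → Finset α)
    (n k : ℕ) : ℝ :=
  ((Finset.univ : Finset (Fin n → Finset α)).filter
      (fun y => ∀ i : Fin n, y i ⊆ Ss (i : ℕ) ∧ (y i).card ≤ k)).sup'
    ⟨(fun _ => ∅), by simp⟩ (fun y => f (Finset.univ.biUnion (fun i => y i)))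

lemma submod_union [DecidableEq α] {f : Finset α → ℝ} (hmono : IsMonotoneFn f)
    (hsub : IsSubmodularFn f) (A : Finset α) : ∀ C D : Finset α, C ⊆ D →
    f (A ∪ D) - f D ≤ f (A ∪ C) - f C := by
  induction A using Finset.induction_on with
  | empty => intro C D h; simp
  | @insert a A' ha ih =>
    intro C D hCD
    have h1 : insert a A' ∪ D = insert a (A' ∪ D) := insert_union a A' D
    have h2 : insert a A' ∪ C = insert a (A' ∪ C) := insert_union a A' C
    have key : f (insert a (A' ∪ D)) - f (A' ∪ D) ≤ f (insert a (A' ∪ C)) - f (A' ∪ C) := by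
      by_cases haD : a ∈ A' ∪ D
      · rw [insert_eq_self.2 haD]
        have := hmono (A' ∪ C) (insert a (A' ∪ C)) (subset_insert _ _)
        linarith
      · exact hsub (A' ∪ C) (A' ∪ D) (union_subset_union_right hCD) a haD
    have := ih C D hCD
    rw [h1, h2]
    linarith

lemma pref_succ [DecidableEq α] (x : ℕ → Finset α) (i : ℕ) :
    pref x (i + 1) = x i ∪ pref x i := by
  simp [pref, range_add_one]

lemma pref_mono [DecidableEq α] (x : ℕ → Finset α) {i j : ℕ} (h : i ≤ j) :
    pref x i ⊆ pref x j :=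
  biUnion_subset_biUnion_of_subset_left x (range_subset_range.2 h)

lemma marg_subadd [DecidableEq α] {f : Finset α → ℝ} (hmono : IsMonotoneFn f)
    (hsub : IsSubmodularFn f) (x : ℕ → Finset α) (C : Finset α) (n : ℕ) :
    f (pref x n ∪ C) - f C ≤ ∑ i ∈ range n, (f (x i ∪ C) - f C) := by
  induction n with
  | zero => simp [pref]
  | succ n ih =>
    rw [pref_succ, sum_range_succ, union_assoc]
    have h1 : f (x n ∪ (pref x n ∪ C)) - f (pref x n ∪ C) ≤ f (x n ∪ C) - f C :=
      submod_union hmono hsub (x n) C (pref x n ∪ C) subset_union_right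
    linarith

/-- First chain of inequalities in the proof of Theorem 2. -/
theorem stmt9 [DecidableEq α] [Fintype α] (f : Finset α → ℝ)
    (hnorm : f ∅ = 0) (hmono : IsMonotoneFn f) (hsub : IsSubmodularFn f)
    (n k m : ℕ) (hn : 2 ≤ n) (hk : 1 ≤ k) (Ss : ℕ → Finset α)
    (xng : ℕ → Finset α) (hng : NomGreedy f Ss k n xng)
    (z xag : ℕ → Finset α)
    (hz : ∀ i < n - 1, z i ⊆ Ss i ∧ (z i).card ≤ m)
    (hag : ∀ i < n, xag i ⊆ Ss i ∪ pref z i ∧ (xag i).card ≤ k) :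
    f (pref xag n) ≤ 2 * f (pref xng n) +
      marg f (pref z (n - 1) ∩ pref xag n) (pref xng n) := by
  set X := pref xng n with hX
  set Zt := pref z (n - 1) ∩ pref xag n with hZt
  set C := Zt ∪ X with hCdef
  -- step A: monotonicity
  have hA : f (pref xag n) ≤ f (pref xag n ∪ C) := hmono _ _ subset_union_left
  -- step B: subadditivity of marginals
  have hB : f (pref xag n ∪ C) - f C ≤ ∑ i ∈ range n, (f (xag i ∪ C) - f C) :=
    marg_subadd hmono hsub xag C n
  -- step C: each term bounded by the greedy increment
  have hC3 : ∀ i ∈ range n, f (xag i ∪ C) - f C ≤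
      f (xng i ∪ pref xng i) - f (pref xng i) := by
    intro i hi
    rw [mem_range] at hi
    set c := xag i \ C with hc
    have hcu : c ∪ C = xag i ∪ C := sdiff_union_self_eq_union
    have hcsub : c ⊆ Ss i := by
      intro a hac
      rw [hc, mem_sdiff] at hac
      obtain ⟨hax, haC⟩ := hac
      have := (hag i hi).1 hax
      rcases mem_union.1 this with h | h
      · exact h
      · exfalso
        apply haC
        rw [hCdef, mem_union]
        left
        rw [hZt, mem_inter]
        constructor
        · exact pref_mono z (by omega) h
        · exact mem_biUnion.2 ⟨i, mem_range.2 hi, hax⟩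
    have hccard : c.card ≤ k := le_trans (card_le_card sdiff_subset) (hag i hi).2
    have hXsub : pref xng i ⊆ C := fun a ha =>
      mem_union.2 (Or.inr (pref_mono xng (le_of_lt hi) ha))
    have h1 : f (c ∪ C) - f C ≤ f (c ∪ pref xng i) - f (pref xng i) :=
      submod_union hmono hsub c (pref xng i) C hXsub
    have h2 : f (c ∪ pref xng i) ≤ f (xng i ∪ pref xng i) :=
      (hng i hi).2.2 c hcsub hccard
    rw [← hcu]
    linarith
  have hsum := Finset.sum_le_sum hC3
  -- step D: telescoping
  have tele : ∑ i ∈ range n, (f (xng i ∪ pref xng i) - f (pref xng i)) = f X := by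
    have := Finset.sum_range_sub (fun i => f (pref xng i)) n
    calc ∑ i ∈ range n, (f (xng i ∪ pref xng i) - f (pref xng i))
        = ∑ i ∈ range n, (f (pref xng (i + 1)) - f (pref xng i)) := by
          apply Finset.sum_congr rfl; intro i _; rw [pref_succ]
      _ = f (pref xng n) - f (pref xng 0) := this
      _ = f X := by
          have h0 : pref xng 0 = (∅ : Finset α) := by simp [pref]
          rw [h0, hnorm, hX]; ring
  have hfC : f C = f X + marg f Zt X := by
    rw [marg]; ring
  linarith
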